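/- Let k ≥ 2 be an integer. If a loopless strict digraph D contains no directed cycle whose length is congruent to 1 modulo k, then χ(D) ≤ k. -/

import Mathlib

variable {V : Type*}

/-- A directed cycle in a digraph `D`, given as an injective map `Fin m → V`
(`m ≥ 2`) whose consecutive images (cyclically) are edges of `D`. -/
def IsCycleFun (D : V → V → Prop) {m : ℕ} (f : Fin m → V) : Prop :=
  2 ≤ m ∧ Function.Injective f ∧ ∀ i : Fin m, D (f i) (f (finRotate m i))

/-- The set `S` contains a directed cycle of `D`. -/
def HasCycleIn (D : V → V → Prop) (S : Set V) : Prop :=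
  ∃ (m : ℕ) (f : Fin m → V), IsCycleFun D f ∧ ∀ i, f i ∈ S

/-- Out-degree of a vertex. -/
noncomputable def outDeg (D : V → V → Prop) (v : V) : ℕ := Nat.card {u | D v u}

/-- In-degree of a vertex. -/
noncomputable def inDeg (D : V → V → Prop) (v : V) : ℕ := Nat.card {u | D u v}

/-- A coloring of the vertices of `D` with no monochromatic directed cycle. -/
def ProperColoring (D : V → V → Prop) {k : ℕ} (c : V → Fin k) : Prop :=
  ∀ (m : ℕ) (f : Fin m → V), IsCycleFun D f → ∃ i j, c (f i) ≠ c (f j)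

/-- The number of proper `k`-colorings of `D` (value of the dichromatic polynomial). -/
noncomputable def numColorings (V : Type*) (D : V → V → Prop) (k : ℕ) : ℕ :=
  Nat.card {c : V → Fin k // ProperColoring D c}

/-- The finset `S` carries a (Hamiltonian on `S`) directed cycle of `D`. -/
def IsCycleSet (D : V → V → Prop) (S : Finset V) : Prop :=
  2 ≤ S.card ∧ ∃ f : Fin S.card ≃ {x // x ∈ S},
    ∀ i, D (f i) (f (finRotate S.card i))

/-- The finset `S` induces exactly a directed cycle of `D`. -/
def IsInducedCycleSet (D : V → V → Prop) (S : Finset V) : Prop :=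
  2 ≤ S.card ∧ ∃ f : Fin S.card ≃ {x // x ∈ S},
    (∀ i, D (f i) (f (finRotate S.card i))) ∧
    ∀ a b : {x // x ∈ S}, D (a : V) b → ∃ i, f i = a ∧ f (finRotate S.card i) = b

/-- `D` has girth `g` : it has a directed cycle of length `g` and no shorter one. -/
def HasGirth (D : V → V → Prop) (g : ℕ) : Prop :=
  (∃ f : Fin g → V, IsCycleFun D f) ∧
    ∀ (m : ℕ) (f : Fin m → V), IsCycleFun D f → g ≤ m


section DfsAux

variable {D : V → V → Prop}


variable {D : V → V → Prop}

def Climb (D : V → V → Prop) (ℓ : V → ℕ) (S : Set V) (a b : V) : Prop :=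
  ∃ (t : ℕ) (g : ℕ → V), g 0 = a ∧ g t = b ∧ (∀ j ≤ t, g j ∈ S) ∧
    ∀ j < t, D (g j) (g (j+1)) ∧ ℓ (g (j+1)) = ℓ (g j) + 1

lemma climb_refl (ℓ : V → ℕ) (S : Set V) {a : V} (ha : a ∈ S) : Climb D ℓ S a a :=
  ⟨0, fun _ => a, rfl, rfl, fun _ _ => ha, fun j hj => absurd hj (Nat.not_lt_zero j)⟩

lemma climb_mono {ℓ ℓ' : V → ℕ} {S S' : Set V} {a b : V} (hS : S ⊆ S')
    (hagree : ∀ x ∈ S, ℓ' x = ℓ x) (h : Climb D ℓ S a b) : Climb D ℓ' S' a b := by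
  obtain ⟨t, g, h0, ht, hmem, hstep⟩ := h
  exact ⟨t, g, h0, ht, fun j hj => hS (hmem j hj), fun j hj => by
    obtain ⟨hd, hl⟩ := hstep j hj
    exact ⟨hd, by rw [hagree _ (hmem (j+1) hj), hagree _ (hmem j (le_of_lt hj)), hl]⟩⟩

lemma climb_cons {ℓ : V → ℕ} {S : Set V} {a a' b : V} (ha' : a' ∈ S) (hD : D a' a)
    (hl : ℓ a = ℓ a' + 1) (h : Climb D ℓ S a b) : Climb D ℓ S a' b := by
  obtain ⟨t, g, h0, ht, hmem, hstep⟩ := h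
  refine ⟨t+1, fun j => if j = 0 then a' else g (j-1), by simp, by simp [ht], ?_, ?_⟩
  · intro j hj
    by_cases h0' : j = 0
    · simp [h0', ha']
    · simp only [h0', if_false]
      exact hmem _ (by omega)
  · intro j hj
    by_cases h0' : j = 0
    · subst h0'; simpa [h0] using ⟨hD, hl⟩
    · obtain ⟨j', rfl⟩ := Nat.exists_eq_succ_of_ne_zero h0'
      simpa using hstep j' (by omega)

lemma climb_levels {ℓ : V → ℕ} {t : ℕ} {g : ℕ → V}
    (hstep : ∀ j < t, D (g j) (g (j+1)) ∧ ℓ (g (j+1)) = ℓ (g j) + 1) :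
    ∀ j ≤ t, ℓ (g j) = ℓ (g 0) + j := by
  intro j hj
  induction j with
  | zero => simp
  | succ n ih => rw [(hstep n (by omega)).2, ih (by omega)]; ring

open Fin.NatCast in
lemma cyc_all {m : ℕ} (hm : 2 ≤ m) (P : Fin m → Prop)
    (hstep : ∀ i, P i → P (finRotate m i)) {i₀ : Fin m} (h : P i₀) : ∀ j, P j := by
  obtain ⟨m', rfl⟩ : ∃ m', m = m' + 1 := ⟨m - 1, by omega⟩
  have key : ∀ s : ℕ, P (i₀ + (s : Fin (m'+1))) := by
    intro s
    induction s with
    | zero => simpa using h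
    | succ n ih =>
        have := hstep _ ih
        rw [finRotate_succ_apply] at this
        have hcast : ((n+1 : ℕ) : Fin (m'+1)) = (n : Fin (m'+1)) + 1 := by push_cast; ring
        rw [hcast, ← add_assoc]
        exact this
  intro j
  have := key ((j - i₀ : Fin (m'+1)) : ℕ)
  rwa [Fin.cast_val_eq_self, add_comm, sub_add_cancel] at this

/-- Reachability from `v` where every step must land inside `W`. -/
def Reach (D : V → V → Prop) (W : Finset V) (v u : V) : Prop :=
  Relation.ReflTransGen (fun a b => D a b ∧ b ∈ W) v u

lemma reach_mono {W W' : Finset V} (h : W ⊆ W') {v u : V} (hr : Reach D W v u) :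
    Reach D W' v u := by
  induction hr with
  | refl => exact Relation.ReflTransGen.refl
  | tail _ hs ih => exact ih.tail ⟨hs.1, h hs.2⟩

/-- Cycle property: every cycle inside `S` has an arc `(u, x)` such that there is
an increasing chain from `x` back to `u` inside `S`. -/
def CycProp (D : V → V → Prop) (ℓ : V → ℕ) (S : Finset V) : Prop :=
  ∀ (m : ℕ) (f : Fin m → V), IsCycleFun D f → (∀ i, f i ∈ S) →
    ∃ i, Climb D ℓ ↑S (f (finRotate m i)) (f i)

lemma explore [DecidableEq V] (hl : ∀ v, ¬ D v v) :
    ∀ (n : ℕ) (W : Finset V), W.card ≤ n → ∀ v ∈ W, ∀ d : ℕ,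
    ∃ (R : Finset V) (ℓ : V → ℕ),
      R ⊆ W ∧ (∀ u, u ∈ R ↔ Reach D W v u) ∧ ℓ v = d ∧
      (∀ w ∈ R, Climb D ℓ ↑R v w) ∧ CycProp D ℓ R := by
  intro n
  induction n with
  | zero => intro W hW v hv; exact absurd (Finset.card_pos.mpr ⟨v, hv⟩) (by omega)
  | succ n ih =>
    intro W hW v hv d
    by_cases hnb : ∃ u ∈ W.erase v, D v u
    · -- recursive case
      obtain ⟨u, hu, hDu⟩ := hnb
      obtain ⟨R₁, ℓ₁, hR₁W, hR₁iff, hℓ₁u, hchain₁, hcyc₁⟩ :=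
        ih (W.erase v) (by
          have := Finset.card_erase_of_mem hv; omega) u hu (d+1)
      have huR₁ : u ∈ R₁ := (hR₁iff u).mpr Relation.ReflTransGen.refl
      have hvnR₁ : v ∉ R₁ := fun h => (Finset.mem_erase.mp (hR₁W h)).1 rfl
      have hvW₂ : v ∈ W \ R₁ := Finset.mem_sdiff.mpr ⟨hv, hvnR₁⟩
      obtain ⟨R₂, ℓ₂, hR₂W, hR₂iff, hℓ₂v, hchain₂, hcyc₂⟩ :=
        ih (W \ R₁) (by
          have h1 : u ∈ W := Finset.mem_of_mem_erase hu
          have : (W \ R₁).card < W.card :=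
            Finset.card_lt_card (Finset.sdiff_ssubset (by
              intro x hx; exact Finset.mem_of_mem_erase (hR₁W hx)) ⟨u, huR₁⟩)
          omega) v hvW₂ d
      have hvR₂ : v ∈ R₂ := (hR₂iff v).mpr Relation.ReflTransGen.refl
      set R : Finset V := R₁ ∪ R₂ with hR
      have hdisj : ∀ x ∈ R₂, x ∉ R₁ := fun x hx => (Finset.mem_sdiff.mp (hR₂W hx)).2
      set ℓ : V → ℕ := fun x => if x ∈ R₁ then ℓ₁ x else ℓ₂ x with hℓ
      have hagree₁ : ∀ x ∈ (R₁ : Set V), ℓ x = ℓ₁ x := fun x hx => by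
        simp only [hℓ, Finset.mem_coe] at hx ⊢; rw [if_pos hx]
      have hagree₂ : ∀ x ∈ (R₂ : Set V), ℓ x = ℓ₂ x := fun x hx => by
        simp only [hℓ, Finset.mem_coe] at hx ⊢; rw [if_neg (hdisj x hx)]
      have hRW : R ⊆ W := Finset.union_subset
        (fun x hx => Finset.mem_of_mem_erase (hR₁W hx))
        (fun x hx => (Finset.mem_sdiff.mp (hR₂W hx)).1)
      -- closure of R₁ under steps staying in W, except into v
      have hclose₁ : ∀ a ∈ R₁, ∀ b, D a b → b ∈ W → b ≠ v → b ∈ R₁ := by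
        intro a ha b hD hbW hbv
        exact (hR₁iff b).mpr (((hR₁iff a).mp ha).tail ⟨hD, Finset.mem_erase.mpr ⟨hbv, hbW⟩⟩)
      have hclose₂ : ∀ a ∈ R₂, ∀ b, D a b → b ∈ W → b ∉ R₁ → b ∈ R₂ := by
        intro a ha b hD hbW hbR₁
        exact (hR₂iff b).mpr (((hR₂iff a).mp ha).tail ⟨hD, Finset.mem_sdiff.mpr ⟨hbW, hbR₁⟩⟩)
      have hiff : ∀ x, x ∈ R ↔ Reach D W v x := by
        intro x
        constructor
        · intro hx
          rcases Finset.mem_union.mp hx with hx | hx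
          · exact Relation.ReflTransGen.head ⟨hDu, Finset.mem_of_mem_erase hu⟩
              (reach_mono (Finset.erase_subset v W) ((hR₁iff x).mp hx))
          · exact reach_mono (Finset.sdiff_subset) ((hR₂iff x).mp hx)
        · intro hx
          induction hx with
          | refl => exact Finset.mem_union_right _ hvR₂
          | tail _ hs ihh =>
            rename_i b c _
            rcases Finset.mem_union.mp ihh with hb | hb
            · by_cases hcv : c = v
              · exact hcv ▸ Finset.mem_union_right _ hvR₂
              · exact Finset.mem_union_left _ (hclose₁ b hb c hs.1 hs.2 hcv)
            · by_cases hcR₁ : c ∈ R₁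
              · exact Finset.mem_union_left _ hcR₁
              · exact Finset.mem_union_right _ (hclose₂ b hb c hs.1 hs.2 hcR₁)
      have hℓv : ℓ v = d := by simp only [hℓ, if_neg hvnR₁]; exact hℓ₂v
      have hsub₁ : (R₁ : Set V) ⊆ ↑R := Finset.coe_subset.mpr Finset.subset_union_left
      have hsub₂ : (R₂ : Set V) ⊆ ↑R := Finset.coe_subset.mpr Finset.subset_union_right
      have hchain : ∀ w ∈ R, Climb D ℓ ↑R v w := by
        intro w hw
        rcases Finset.mem_union.mp hw with hw | hw
        · have hc : Climb D ℓ ↑R u w := climb_mono hsub₁ hagree₁ (hchain₁ w hw)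
          refine climb_cons (Finset.mem_coe.mpr (Finset.mem_union_right _ hvR₂)) hDu ?_ hc
          rw [hℓv, hagree₁ u huR₁, hℓ₁u]
        · exact climb_mono hsub₂ hagree₂ (hchain₂ w hw)
      refine ⟨R, ℓ, hRW, hiff, hℓv, hchain, ?_⟩
      -- cycle property
      intro m f hf hfmem
      by_cases hall₁ : ∀ i, f i ∈ R₁
      · obtain ⟨i, hi⟩ := hcyc₁ m f hf hall₁
        exact ⟨i, climb_mono hsub₁ hagree₁ hi⟩
      · by_cases hex : ∃ i, f i ∈ R₁
        · obtain ⟨i₀, hi₀⟩ := hex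
          -- there must be an arc from R₁ into v
          by_cases harc : ∃ i', f i' ∈ R₁ ∧ f (finRotate m i') = v
          · obtain ⟨i', h1, h2⟩ := harc
            refine ⟨i', ?_⟩
            rw [h2]
            exact hchain (f i') (Finset.mem_union_left _ h1)
          · exfalso
            apply hall₁
            refine cyc_all hf.1 (fun i => f i ∈ R₁) ?_ hi₀
            intro i hi
            by_cases hv' : f (finRotate m i) = v
            · exact absurd ⟨i, hi, hv'⟩ harc
            · exact hclose₁ _ hi _ (hf.2.2 i) (hRW (hfmem (finRotate m i))) hv'
        · push_neg at hex
          have hall₂ : ∀ i, f i ∈ R₂ := by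
            intro i
            rcases Finset.mem_union.mp (hfmem i) with h | h
            · exact absurd h (hex i)
            · exact h
          obtain ⟨i, hi⟩ := hcyc₂ m f hf hall₂
          exact ⟨i, climb_mono hsub₂ hagree₂ hi⟩
    · -- base case: no white neighbor
      push_neg at hnb
      refine ⟨{v}, fun _ => d, Finset.singleton_subset_iff.mpr hv, ?_, rfl, ?_, ?_⟩
      · intro x
        simp only [Finset.mem_singleton]
        constructor
        · rintro rfl; exact Relation.ReflTransGen.refl
        · intro h
          induction h with
          | refl => rfl
          | tail _ hs ihh =>
            rename_i b c _
            by_cases hcv : c = v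
            · exact hcv
            · exact absurd (ihh ▸ hs.1) (hnb c (Finset.mem_erase.mpr ⟨hcv, hs.2⟩))
      · intro w hw
        rw [Finset.mem_singleton] at hw
        subst hw
        exact climb_refl _ _ (by simp)
      · intro m f hf hfmem
        exfalso
        have hm : 2 ≤ m := hf.1
        have h01 : (⟨0, by omega⟩ : Fin m) ≠ ⟨1, by omega⟩ := by
          intro h; simpa using congrArg Fin.val h
        apply h01
        apply hf.2.1
        have h0 := Finset.mem_singleton.mp (hfmem ⟨0, by omega⟩)
        have h1 := Finset.mem_singleton.mp (hfmem ⟨1, by omega⟩)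
        rw [h0, h1]


lemma mainLoop [DecidableEq V] (hl : ∀ v, ¬ D v v) :
    ∀ (n : ℕ) (W : Finset V), W.card ≤ n →
    ∃ ℓ : V → ℕ, CycProp D ℓ W := by
  intro n
  induction n with
  | zero =>
    intro W hW
    refine ⟨fun _ => 0, ?_⟩
    intro m f hf hfmem
    exfalso
    have hW0 : W = ∅ := Finset.card_eq_zero.mp (by omega)
    have hm : 2 ≤ m := hf.1
    have := hfmem ⟨0, by omega⟩
    simp [hW0] at this
  | succ n ih =>
    intro W hW
    rcases Finset.eq_empty_or_nonempty W with rfl | ⟨v, hv⟩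
    · refine ⟨fun _ => 0, ?_⟩
      intro m f hf hfmem
      exfalso
      have hm : 2 ≤ m := hf.1
      have := hfmem ⟨0, by omega⟩
      simp at this
    · obtain ⟨R, ℓ₁, hRW, hRiff, _, _, hcyc₁⟩ := explore hl W.card W le_rfl v hv 0
      have hvR : v ∈ R := (hRiff v).mpr Relation.ReflTransGen.refl
      obtain ⟨ℓ₂, hcyc₂⟩ := ih (W \ R) (by
        have : (W \ R).card < W.card := Finset.card_lt_card (Finset.sdiff_ssubset hRW ⟨v, hvR⟩)
        omega)
      set ℓ : V → ℕ := fun x => if x ∈ R then ℓ₁ x else ℓ₂ x with hℓ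
      have hagree₁ : ∀ x ∈ (R : Set V), ℓ x = ℓ₁ x := fun x hx => by
        simp only [hℓ, Finset.mem_coe] at hx ⊢; rw [if_pos hx]
      have hagree₂ : ∀ x ∈ ((W \ R : Finset V) : Set V), ℓ x = ℓ₂ x := fun x hx => by
        simp only [hℓ, Finset.mem_coe, Finset.mem_sdiff] at hx ⊢; rw [if_neg hx.2]
      refine ⟨ℓ, ?_⟩
      intro m f hf hfmem
      by_cases hex : ∃ i, f i ∈ R
      · obtain ⟨i₀, hi₀⟩ := hex
        have hall : ∀ i, f i ∈ R := by
          refine cyc_all hf.1 (fun i => f i ∈ R) ?_ hi₀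
          intro i hi
          exact (hRiff _).mpr (((hRiff _).mp hi).tail ⟨hf.2.2 i, hfmem (finRotate m i)⟩)
        obtain ⟨i, hi⟩ := hcyc₁ m f hf hall
        exact ⟨i, climb_mono (Finset.coe_subset.mpr hRW) hagree₁ hi⟩
      · push_neg at hex
        have hall : ∀ i, f i ∈ W \ R := fun i => Finset.mem_sdiff.mpr ⟨hfmem i, hex i⟩
        obtain ⟨i, hi⟩ := hcyc₂ m f hf hall
        exact ⟨i, climb_mono (Finset.coe_subset.mpr Finset.sdiff_subset) hagree₂ hi⟩

end DfsAux

/-- If k ≥ 2 and D has no directed cycle of length ≡ 1 (mod k), then χ(D) ≤ k. -/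
theorem stmt_14 {V : Type*} [Fintype V] (D : V → V → Prop) (hloopless : ∀ v, ¬ D v v)
    (k : ℕ) (hk : 2 ≤ k)
    (hcyc : ∀ (m : ℕ) (f : Fin m → V), IsCycleFun D f → ¬ m % k = 1) :
    ∃ c : V → Fin k, ProperColoring D c := by
  classical
  obtain ⟨ℓ, hℓ⟩ := mainLoop hloopless (Finset.univ.card (α := V)) Finset.univ le_rfl
  have hk0 : 0 < k := by omega
  refine ⟨fun v => ⟨ℓ v % k, Nat.mod_lt _ hk0⟩, ?_⟩
  intro m f hf
  by_contra hmono
  push_neg at hmono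
  obtain ⟨i, hclimb⟩ := hℓ m f hf (fun i => Finset.mem_univ _)
  obtain ⟨t, g, hg0, hgt, _, hstep⟩ := hclimb
  have hm : 2 ≤ m := hf.1
  -- levels along the chain
  have hlev := climb_levels hstep
  have hrotne : finRotate m i ≠ i := by
    obtain ⟨m', rfl⟩ : ∃ m', m = m' + 1 := ⟨m - 1, by omega⟩
    rw [finRotate_succ_apply]
    intro h
    have h1 : (1 : Fin (m' + 1)) = 0 := by
      have := congrArg (· - i) h
      simpa [add_comm, add_sub_cancel_right] using this
    have := congrArg Fin.val h1
    simp [Fin.val_one, Nat.mod_eq_of_lt (show 1 < m' + 1 by omega)] at this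
  -- mod k equality of the endpoints
  have hmodeq : ℓ (f i) % k = ℓ (f (finRotate m i)) % k := by
    have := hmono i (finRotate m i)
    have := congrArg Fin.val this
    simpa using this
  have hend : ℓ (g t) = ℓ (g 0) + t := hlev t le_rfl
  have htmod : t % k = 0 := by
    rw [hg0, hgt] at hend
    have h1 : ℓ (f (finRotate m i)) + t ≡ ℓ (f (finRotate m i)) + 0 [MOD k] := by
      rw [add_zero, ← hend]
      exact hmodeq
    have h2 : t ≡ 0 [MOD k] := Nat.ModEq.add_left_cancel' _ h1
    simpa [Nat.ModEq] using h2
  have ht0 : t ≠ 0 := by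
    intro h
    subst h
    exact hrotne (hf.2.1 (by rw [← hg0, ← hgt]))
  have ht2 : 2 ≤ t := by
    rcases Nat.lt_or_ge t k with h | h
    · have := Nat.mod_eq_of_lt h
      omega
    · omega
  -- build the forbidden cycle
  have hginj : ∀ j₁ ≤ t, ∀ j₂ ≤ t, g j₁ = g j₂ → j₁ = j₂ := by
    intro j₁ h₁ j₂ h₂ hg
    have e₁ := hlev j₁ h₁
    have e₂ := hlev j₂ h₂
    rw [hg] at e₁
    omega
  set F : Fin (t + 1) → V := fun j => g j with hF
  have hFcyc : IsCycleFun D F := by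
    refine ⟨by omega, ?_, ?_⟩
    · intro a b hab
      exact Fin.ext (hginj a (by omega) b (by omega) hab)
    · intro j
      rcases eq_or_ne j (Fin.last t) with rfl | hlast
      · have : F (finRotate (t+1) (Fin.last t)) = g 0 := by
          rw [finRotate_succ_apply]
          simp [hF]
        rw [this, hg0]
        have : F (Fin.last t) = g t := rfl
        rw [this, hgt]
        exact hf.2.2 i
      · have hjlt : (j : ℕ) < t := by
          have := j.isLt
          have : (j : ℕ) ≠ t := fun h => hlast (Fin.ext h)
          omega
        have hco : ((finRotate (t+1) j : Fin (t+1)) : ℕ) = (j : ℕ) + 1 := by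
          rw [coe_finRotate, if_neg hlast]
        have : F (finRotate (t+1) j) = g ((j : ℕ) + 1) := by
          simp only [hF, hco]
        rw [this]
        exact (hstep j hjlt).1
  have h2 : t ≡ 0 [MOD k] := by simpa [Nat.ModEq] using htmod
  have h3 : (t + 1) % k = 1 % k := h2.add_right 1
  exact hcyc (t+1) F hFcyc (by rw [h3, Nat.mod_eq_of_lt (show 1 < k by omega)])
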